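/- arXiv:1606.02258 — 3 statements merged into one kernel-verified Lean document; each statement's English description precedes it below -/
import Mathlib

section
/- Let σ: ℝ^m → ℝ^m satisfy σ(0)=0 and |σ(ξ₂)-σ(ξ₁)| ≤ N·||ξ₂|^κ - |ξ₁|^κ| for all ξ₁, ξ₂ ∈ ℝ^m, where κ ∈ (0,1) and N > 0. Then for any η with 0 ≤ η ≤ 1-κ and any nonzero ξ₁, ξ₂ ∈ ℝ^m, we have |σ(ξ₂)-σ(ξ₁)| ≤ (κ/(κ+η))·N·(|ξ₂|^{-η} + |ξ₁|^{-η})·|ξ₂-ξ₁|^{κ+η}. -/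
open Real Set

lemma key_ineq (κ η a b : ℝ) (hκ : 0 < κ) (hη : 0 ≤ η) (hκη : κ + η ≤ 1)
    (ha : 0 < a) (hab : a ≤ b) :
    b ^ κ - a ^ κ ≤ κ / (κ + η) * a ^ (-η) * (b - a) ^ (κ + η) := by
  have hκη0 : 0 < κ + η := by linarith
  set f : ℝ → ℝ := fun x => κ / (κ + η) * a ^ (-η) * (x - a) ^ (κ + η) - (x ^ κ - a ^ κ) with hf
  have hderiv : ∀ x ∈ Ioi a, HasDerivAt f
      (κ * a ^ (-η) * (x - a) ^ (κ + η - 1) - κ * x ^ (κ - 1)) x := by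
    intro x hx
    have hx0 : (0:ℝ) < x := lt_trans ha hx
    have hxa : (0:ℝ) < x - a := sub_pos.2 hx
    have h1 : HasDerivAt (fun x : ℝ => (x - a) ^ (κ + η)) ((κ + η) * (x - a) ^ (κ + η - 1)) x := by
      have := (Real.hasDerivAt_rpow_const (p := κ + η) (Or.inl hxa.ne')).comp x
        ((hasDerivAt_id x).sub_const a)
      simpa [Function.comp_def] using this
    have h2 : HasDerivAt (fun x : ℝ => x ^ κ) (κ * x ^ (κ - 1)) x :=
      Real.hasDerivAt_rpow_const (Or.inl hx0.ne')
    have := ((h1.const_mul (κ / (κ + η) * a ^ (-η))).sub (h2.sub_const (a ^ κ)))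
    refine this.congr_deriv ?_
    field_simp [hκη0.ne']
  have hcont : ContinuousOn f (Ici a) := by
    apply ContinuousOn.sub
    · exact continuousOn_const.mul
        (ContinuousOn.rpow_const (continuous_id.sub continuous_const).continuousOn
          (fun x _ => Or.inr hκη0.le))
    · apply ContinuousOn.sub _ continuousOn_const
      apply ContinuousOn.rpow_const continuousOn_id
      intro x hx; left; exact (ha.trans_le hx).ne'
  have hmono : MonotoneOn f (Ici a) := by
    apply monotoneOn_of_deriv_nonneg (convex_Ici a) hcont
    · intro x hx
      rw [interior_Ici] at hx
      exact (hderiv x hx).differentiableAt.differentiableWithinAt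
    · intro x hx
      rw [interior_Ici] at hx
      rw [(hderiv x hx).deriv]
      have hx0 : (0:ℝ) < x := lt_trans ha hx
      have hxa : (0:ℝ) < x - a := sub_pos.2 hx
      have hle : x ^ (κ - 1) ≤ a ^ (-η) * (x - a) ^ (κ + η - 1) := by
        have e1 : x ^ (κ - 1) = x ^ (-η) * x ^ (κ + η - 1) := by
          rw [← Real.rpow_add hx0]; ring_nf
        rw [e1]
        have h3 : x ^ (-η) ≤ a ^ (-η) :=
          Real.rpow_le_rpow_of_nonpos ha (le_of_lt hx) (neg_nonpos.2 hη)
        have h4 : x ^ (κ + η - 1) ≤ (x - a) ^ (κ + η - 1) :=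
          Real.rpow_le_rpow_of_nonpos hxa (by linarith) (by linarith)
        exact mul_le_mul h3 h4 (Real.rpow_nonneg hx0.le _) (Real.rpow_nonneg ha.le _)
      have : κ * x ^ (κ - 1) ≤ κ * (a ^ (-η) * (x - a) ^ (κ + η - 1)) :=
        mul_le_mul_of_nonneg_left hle hκ.le
      nlinarith
  have h0 : f a = 0 := by simp [hf, Real.zero_rpow hκη0.ne']
  have := hmono (self_mem_Ici) (show b ∈ Ici a from hab) hab
  rw [h0] at this
  simp only [hf] at this
  linarith

theorem stmt0 (m : ℕ) (σ : EuclideanSpace ℝ (Fin m) → EuclideanSpace ℝ (Fin m))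
    (κ N : ℝ) (hκ : κ ∈ Ioo (0:ℝ) 1) (hN : 0 < N)
    (hσ0 : σ 0 = 0)
    (hσ : ∀ ξ₁ ξ₂ : EuclideanSpace ℝ (Fin m),
      ‖σ ξ₂ - σ ξ₁‖ ≤ N * |‖ξ₂‖ ^ κ - ‖ξ₁‖ ^ κ|)
    (η : ℝ) (hη0 : 0 ≤ η) (hη1 : η ≤ 1 - κ)
    (ξ₁ ξ₂ : EuclideanSpace ℝ (Fin m)) (h₁ : ξ₁ ≠ 0) (h₂ : ξ₂ ≠ 0) :
    ‖σ ξ₂ - σ ξ₁‖ ≤ (κ / (κ + η)) * N * (‖ξ₂‖ ^ (-η) + ‖ξ₁‖ ^ (-η)) * ‖ξ₂ - ξ₁‖ ^ (κ + η) := by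
  obtain ⟨hκ0, hκ1⟩ := hκ
  have hκη0 : 0 < κ + η := by linarith
  have hκη1 : κ + η ≤ 1 := by linarith
  -- general claim for ordered norms
  have main : ∀ a b : EuclideanSpace ℝ (Fin m), a ≠ 0 → b ≠ 0 → ‖a‖ ≤ ‖b‖ →
      ‖σ b - σ a‖ ≤ (κ / (κ + η)) * N * (‖b‖ ^ (-η) + ‖a‖ ^ (-η)) * ‖b - a‖ ^ (κ + η) := by
    intro a b ha hb hab
    have ha0 : (0:ℝ) < ‖a‖ := norm_pos_iff.2 ha
    have hb0 : (0:ℝ) < ‖b‖ := norm_pos_iff.2 hb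
    have h5 : ‖σ b - σ a‖ ≤ N * (‖b‖ ^ κ - ‖a‖ ^ κ) := by
      have := hσ a b
      rwa [abs_of_nonneg (by
        have := Real.rpow_le_rpow ha0.le hab hκ0.le
        linarith)] at this
    have h6 : ‖b‖ ^ κ - ‖a‖ ^ κ ≤ κ / (κ + η) * ‖a‖ ^ (-η) * (‖b‖ - ‖a‖) ^ (κ + η) :=
      key_ineq κ η ‖a‖ ‖b‖ hκ0 hη0 hκη1 ha0 hab
    have h7 : (‖b‖ - ‖a‖) ^ (κ + η) ≤ ‖b - a‖ ^ (κ + η) := by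
      apply Real.rpow_le_rpow (by linarith)
      · have := norm_sub_norm_le b a
        linarith
      · exact hκη0.le
    have h8 : ‖a‖ ^ (-η) ≤ ‖b‖ ^ (-η) + ‖a‖ ^ (-η) := by
      have := Real.rpow_nonneg hb0.le (-η); linarith
    calc ‖σ b - σ a‖ ≤ N * (‖b‖ ^ κ - ‖a‖ ^ κ) := h5
      _ ≤ N * (κ / (κ + η) * ‖a‖ ^ (-η) * (‖b‖ - ‖a‖) ^ (κ + η)) :=
          mul_le_mul_of_nonneg_left h6 hN.le
      _ ≤ N * (κ / (κ + η) * ‖a‖ ^ (-η) * ‖b - a‖ ^ (κ + η)) := by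
          apply mul_le_mul_of_nonneg_left _ hN.le
          apply mul_le_mul_of_nonneg_left h7
          positivity
      _ ≤ (κ / (κ + η)) * N * (‖b‖ ^ (-η) + ‖a‖ ^ (-η)) * ‖b - a‖ ^ (κ + η) := by
          have hq : 0 < κ / (κ + η) := div_pos hκ0 hκη0
          have hrw : 0 ≤ ‖b - a‖ ^ (κ + η) := Real.rpow_nonneg (norm_nonneg _) _
          have hB : 0 ≤ ‖b‖ ^ (-η) := Real.rpow_nonneg hb0.le _
          nlinarith [mul_nonneg (mul_nonneg (mul_nonneg hq.le hN.le) hB) hrw]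
    -- end
  rcases le_total ‖ξ₁‖ ‖ξ₂‖ with h | h
  · exact main ξ₁ ξ₂ h₁ h₂ h
  · have := main ξ₂ ξ₁ h₂ h₁ h
    rw [norm_sub_rev (σ ξ₁), norm_sub_rev ξ₁] at this
    calc ‖σ ξ₂ - σ ξ₁‖ ≤ κ / (κ + η) * N * (‖ξ₁‖ ^ (-η) + ‖ξ₂‖ ^ (-η)) * ‖ξ₂ - ξ₁‖ ^ (κ + η) := this
      _ = (κ / (κ + η)) * N * (‖ξ₂‖ ^ (-η) + ‖ξ₁‖ ^ (-η)) * ‖ξ₂ - ξ₁‖ ^ (κ + η) := by ring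
end

section
/- Let γ ∈ (0,1), κ ∈ (0,1) with γ + κ > 1, and let κ⁻ ∈ (1-γ, κ] so that μ := γ(1 + κ⁻/(1-κ)) > 1. Suppose 0 = λ_0 < λ_1 < ⋯ < λ_n = τ is an increasing sequence and y: [0,τ] → ℝ^m satisfies, for each j, |y_t - y_s| ≤ c·2^{-q_j κ⁻}·|t-s|^γ for s,t ∈ [λ_j, λ_{j+1}], where the integers q_j satisfy 2^{-q_j(1-κ)/γ} ≤ c'·(λ_{j+1}-λ_j). Then for all 0 ≤ k < l ≤ n, |y_{λ_l} - y_{λ_k}| ≤ c·(c')^{γκ⁻/(1-κ)}·Σ_{j=k}^{l-1} (λ_{j+1}-λ_j)^μ ≤ c·(c')^{γκ⁻/(1-κ)}·τ^{μ-γ}·|λ_l - λ_k|^γ. -/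
open Real Set Finset

theorem stmt12 (m : ℕ) (γ κ κm : ℝ)
    (hγ : γ ∈ Ioo (0:ℝ) 1) (hκ : κ ∈ Ioo (0:ℝ) 1) (hγκ : 1 < γ + κ)
    (hκm : κm ∈ Ioc (1 - γ) κ)
    (hμ : 1 < γ * (1 + κm / (1 - κ)))
    (n : ℕ) (lam : ℕ → ℝ) (τ : ℝ)
    (hmono : ∀ j < n, lam j < lam (j + 1))
    (hlam0 : lam 0 = 0) (hlamn : lam n = τ)
    (q : ℕ → ℕ) (c c' : ℝ) (hc : 0 < c) (hc' : 0 < c')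
    (y : ℝ → EuclideanSpace ℝ (Fin m))
    (hyhol : ∀ j < n, ∀ s ∈ Icc (lam j) (lam (j + 1)), ∀ t ∈ Icc (lam j) (lam (j + 1)),
      ‖y t - y s‖ ≤ c * 2 ^ (-(q j : ℝ) * κm) * |t - s| ^ γ)
    (hq : ∀ j < n, (2:ℝ) ^ (-(q j : ℝ) * (1 - κ) / γ) ≤ c' * (lam (j + 1) - lam j)) :
    ∀ k l : ℕ, k < l → l ≤ n →
      ‖y (lam l) - y (lam k)‖
        ≤ c * c' ^ (γ * κm / (1 - κ)) *
          ∑ j ∈ Finset.Ico k l, (lam (j + 1) - lam j) ^ (γ * (1 + κm / (1 - κ))) ∧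
      c * c' ^ (γ * κm / (1 - κ)) *
          ∑ j ∈ Finset.Ico k l, (lam (j + 1) - lam j) ^ (γ * (1 + κm / (1 - κ)))
        ≤ c * c' ^ (γ * κm / (1 - κ)) * τ ^ (γ * (1 + κm / (1 - κ)) - γ) *
            (lam l - lam k) ^ γ := by
  obtain ⟨hγ0, hγ1⟩ := hγ
  obtain ⟨hκ0, hκ1⟩ := hκ
  obtain ⟨hκm0, hκm1⟩ := hκm
  have h1κ : (0:ℝ) < 1 - κ := by linarith
  set e : ℝ := γ * κm / (1 - κ) with he_def
  set μ : ℝ := γ * (1 + κm / (1 - κ)) with hμ_def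
  have hκm_pos : 0 < κm := by linarith
  have he : 0 < e := by positivity
  have hμne : μ ≠ 0 := (zero_lt_one.trans hμ).ne'
  have hμe : μ = γ + e := by
    rw [hμ_def, he_def]
    field_simp
  have hmono' : ∀ a b : ℕ, a ≤ b → b ≤ n → lam a ≤ lam b := by
    intro a b
    induction b with
    | zero => intro hab _; have : a = 0 := by omega
              simp [this]
    | succ b ih =>
      intro hab hbn
      rcases Nat.lt_or_ge a (b + 1) with h | h
      · exact (ih (by omega) (by omega)).trans (hmono b (by omega)).le
      · have : a = b + 1 := by omega
        simp [this]
  -- per-interval bound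
  have key : ∀ j < n, ‖y (lam (j + 1)) - y (lam j)‖
      ≤ c * c' ^ e * (lam (j + 1) - lam j) ^ μ := by
    intro j hj
    have hΔ : 0 < lam (j + 1) - lam j := sub_pos.mpr (hmono j hj)
    have h2eq : (2:ℝ) ^ (-(q j : ℝ) * κm)
        = ((2:ℝ) ^ (-(q j : ℝ) * (1 - κ) / γ)) ^ e := by
      rw [← Real.rpow_mul (by norm_num : (0:ℝ) ≤ 2)]
      congr 1
      rw [he_def]
      field_simp
    have h2 : (2:ℝ) ^ (-(q j : ℝ) * κm) ≤ c' ^ e * (lam (j + 1) - lam j) ^ e := by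
      rw [h2eq, ← Real.mul_rpow hc'.le hΔ.le]
      exact Real.rpow_le_rpow (Real.rpow_nonneg (by norm_num) _) (hq j hj) he.le
    have h0 := hyhol j hj (lam j) ⟨le_refl _, (hmono j hj).le⟩ (lam (j + 1))
      ⟨(hmono j hj).le, le_refl _⟩
    rw [abs_of_pos hΔ] at h0
    refine h0.trans ?_
    have heq : c * (c' ^ e * (lam (j + 1) - lam j) ^ e) * (lam (j + 1) - lam j) ^ γ
        = c * c' ^ e * (lam (j + 1) - lam j) ^ μ := by
      rw [hμe, Real.rpow_add hΔ]
      ring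
    rw [← heq]
    have hΔγ : (0:ℝ) ≤ (lam (j + 1) - lam j) ^ γ := Real.rpow_nonneg hΔ.le _
    gcongr
  -- telescoping
  have tele : ∀ k l : ℕ, k ≤ l → l ≤ n →
      ‖y (lam l) - y (lam k)‖ ≤ ∑ j ∈ Finset.Ico k l, ‖y (lam (j + 1)) - y (lam j)‖ := by
    intro k l hkl
    induction l, hkl using Nat.le_induction with
    | base => intro _; simp
    | succ b hb ih =>
      intro hbn1
      have hbn : b ≤ n := by omega
      rw [Finset.sum_Ico_succ_top hb]
      have hsplit : y (lam (b + 1)) - y (lam k)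
          = (y (lam b) - y (lam k)) + (y (lam (b + 1)) - y (lam b)) := by abel
      calc ‖y (lam (b + 1)) - y (lam k)‖
          ≤ ‖y (lam b) - y (lam k)‖ + ‖y (lam (b + 1)) - y (lam b)‖ := by
            rw [hsplit]; exact norm_add_le _ _
        _ ≤ _ := by gcongr; exact ih hbn
  -- superadditivity
  have superadd : ∀ k l : ℕ, k ≤ l → l ≤ n →
      ∑ j ∈ Finset.Ico k l, (lam (j + 1) - lam j) ^ μ ≤ (lam l - lam k) ^ μ := by
    intro k l hkl
    induction l, hkl using Nat.le_induction with
    | base => intro _; simp [Real.zero_rpow hμne]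
    | succ b hb ih =>
      intro hbn1
      have hbn : b ≤ n := by omega
      have hΔ : 0 ≤ lam (b + 1) - lam b := (sub_pos.mpr (hmono b (by omega))).le
      have hlk : 0 ≤ lam b - lam k := sub_nonneg.mpr (hmono' k b hb hbn)
      rw [Finset.sum_Ico_succ_top hb]
      calc _ ≤ (lam b - lam k) ^ μ + (lam (b + 1) - lam b) ^ μ := by gcongr; exact ih hbn
        _ ≤ ((lam b - lam k) + (lam (b + 1) - lam b)) ^ μ := by
            lift (lam b - lam k) to NNReal using hlk with x
            lift (lam (b + 1) - lam b) to NNReal using hΔ with z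
            exact_mod_cast NNReal.add_rpow_le_rpow_add x z hμ.le
        _ = (lam (b + 1) - lam k) ^ μ := by
            rw [show lam b - lam k + (lam (b + 1) - lam b) = lam (b + 1) - lam k by ring]
  intro k l hkl hln
  have hce : 0 ≤ c * c' ^ e := by positivity
  constructor
  · calc ‖y (lam l) - y (lam k)‖
        ≤ ∑ j ∈ Finset.Ico k l, ‖y (lam (j + 1)) - y (lam j)‖ := tele k l hkl.le hln
      _ ≤ ∑ j ∈ Finset.Ico k l, c * c' ^ e * (lam (j + 1) - lam j) ^ μ := by
          refine Finset.sum_le_sum fun j hj => ?_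
          exact key j (by simp at hj; omega)
      _ = c * c' ^ e * ∑ j ∈ Finset.Ico k l, (lam (j + 1) - lam j) ^ μ := by
          rw [Finset.mul_sum]
  · have hlk : 0 ≤ lam l - lam k := sub_nonneg.mpr (hmono' k l hkl.le hln)
    have hlkτ : lam l - lam k ≤ τ := by
      have h1 : lam 0 ≤ lam k := hmono' 0 k (by omega) (by omega)
      have h2 : lam l ≤ lam n := hmono' l n hln (le_refl _)
      rw [← hlamn]
      rw [hlam0] at h1
      linarith
    have hμγ : 0 ≤ μ - γ := by linarith
    have hfinal : (lam l - lam k) ^ μ ≤ τ ^ (μ - γ) * (lam l - lam k) ^ γ := by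
      have hsplit : (lam l - lam k) ^ μ
          = (lam l - lam k) ^ (μ - γ) * (lam l - lam k) ^ γ := by
        have h := Real.rpow_add' hlk (show μ - γ + γ ≠ 0 by simpa using hμne)
        rw [sub_add_cancel] at h
        exact h
      rw [hsplit]
      exact mul_le_mul_of_nonneg_right (Real.rpow_le_rpow hlk hlkτ hμγ)
        (Real.rpow_nonneg hlk _)
    calc c * c' ^ e * ∑ j ∈ Finset.Ico k l, (lam (j + 1) - lam j) ^ μ
        ≤ c * c' ^ e * (lam l - lam k) ^ μ := by
          gcongr
          exact superadd k l hkl.le hln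
      _ ≤ c * c' ^ e * (τ ^ (μ - γ) * (lam l - lam k) ^ γ) := by gcongr
      _ = c * c' ^ e * τ ^ (μ - γ) * (lam l - lam k) ^ γ := by ring
end

section
/- Let γ ∈ (1/2,1), κ ∈ (0,1) with γ(κ+1) < 1, and η with (1-γ(1+κ))/γ < η < 1-κ. Let α satisfy 1-γ < α < γ(κ+η). Let T > 0, 0 ≤ t₁ < t₂ ≤ T, y ∈ C^γ([0,T]; ℝ^m) with ∫_0^T |y_s|^{-η/(γ(κ+η))} ds < ∞, and σ: ℝ^m → ℝ^m with σ(0)=0 and |σ(ξ₂)-σ(ξ₁)| ≤ N||ξ₂|^κ-|ξ₁|^κ|. Then the quantity J² := ∫_{t₁}^{t₂} (∫_{t₁}^{s} |σ(y_s)-σ(y_u)|/(s-u)^{α+1} du)·(t₂-s)^{α+γ-1} ds satisfies J² ≤ c·N·‖y‖_γ^{κ+η}·(∫_0^T |y_s|^{-η/(γ(κ+η))} ds)^{γ(κ+η)}·(t₂-t₁)^γ, for a constant c depending only on α, γ, κ, η. -/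
open Real Set MeasureTheory intervalIntegral

lemma interp_aux (κ η : ℝ) (hκ0 : 0 < κ) (hκ1 : κ < 1) (hη0 : 0 < η) (hκη : κ + η < 1)
    {a b : ℝ} (hb : 0 ≤ b) (hba : b ≤ a) :
    a ^ κ - b ^ κ ≤ 2 * (a ^ (-η) + b ^ (-η)) * (a - b) ^ (κ + η) := by
  have ha : 0 ≤ a := hb.trans hba
  rcases eq_or_lt_of_le hb with hb0 | hb0
  · -- b = 0
    rw [← hb0]
    rw [Real.zero_rpow hκ0.ne', sub_zero, sub_zero]
    rcases eq_or_lt_of_le ha with ha0 | ha0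
    · rw [← ha0, Real.zero_rpow hκ0.ne']
      positivity
    · have h1 : a ^ κ = a ^ (-η) * a ^ (κ + η) := by
        rw [← Real.rpow_add ha0]; ring_nf
      rw [h1]
      have h2 : a ^ (-η) ≤ 2 * (a ^ (-η) + (0:ℝ) ^ (-η)) := by
        have : (0:ℝ) ^ (-η) = 0 := Real.zero_rpow (by linarith)
        rw [this]
        have : (0:ℝ) ≤ a ^ (-η) := Real.rpow_nonneg ha _
        linarith
      exact mul_le_mul_of_nonneg_right h2 (Real.rpow_nonneg ha _)
  · -- 0 < b
    have key : a ^ κ - b ^ κ ≤ 2 * (b ^ (-η)) * (a - b) ^ (κ + η) := by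
      rcases le_total (a - b) b with h1 | h2
      · -- a - b ≤ b : use a^κ ≤ b^(κ-1) a
        rcases eq_or_lt_of_le hba with hab | hab
        · rw [← hab]; simp
          positivity
        · have hab0 : 0 < a - b := by linarith
          have hdiv : (1:ℝ) ≤ a / b := (one_le_div hb0).mpr hba
          have h3 : (a / b) ^ κ ≤ a / b := by
            calc (a/b) ^ κ ≤ (a/b) ^ (1:ℝ) := Real.rpow_le_rpow_of_exponent_le hdiv hκ1.le
            _ = a / b := Real.rpow_one _
          have h4 : a ^ κ / b ^ κ ≤ a / b := by
            rwa [Real.div_rpow ha hb0.le] at h3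
          have hbκ : (0:ℝ) < b ^ κ := Real.rpow_pos_of_pos hb0 _
          have h5 : a ^ κ ≤ b ^ κ / b * a := by
            rw [div_le_iff₀ hbκ] at h4
            calc a ^ κ ≤ a / b * b ^ κ := h4
            _ = b ^ κ / b * a := by ring
          have h6 : a ^ κ - b ^ κ ≤ b ^ κ / b * (a - b) := by
            have : b ^ κ / b * b = b ^ κ := by field_simp
            nlinarith [h5]
          have h7 : (a - b) = (a-b) ^ (κ+η) * (a-b) ^ (1 - (κ+η)) := by
            rw [← Real.rpow_add hab0]; ring_nf; rw [Real.rpow_one]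
          have h8 : (a-b) ^ (1 - (κ+η)) ≤ b ^ (1 - (κ+η)) :=
            Real.rpow_le_rpow hab0.le h1 (by linarith)
          have h9 : b ^ κ / b * (a - b) ≤ b ^ κ / b * ((a-b)^(κ+η) * b ^ (1-(κ+η))) := by
            apply mul_le_mul_of_nonneg_left _ (by positivity)
            calc a - b = (a-b)^(κ+η) * (a-b)^(1-(κ+η)) := h7
            _ ≤ (a-b)^(κ+η) * b^(1-(κ+η)) :=
              mul_le_mul_of_nonneg_left h8 (Real.rpow_nonneg hab0.le _)
          have h10 : b ^ κ / b * b ^ (1-(κ+η)) = b ^ (-η) := by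
            have hd : b ^ κ / b = b ^ (κ - 1) := by
              rw [Real.rpow_sub hb0, Real.rpow_one]
            rw [hd, ← Real.rpow_add hb0]
            ring_nf
          calc a ^ κ - b ^ κ ≤ b ^ κ / b * (a - b) := h6
          _ ≤ b ^ κ / b * ((a-b)^(κ+η) * b ^ (1-(κ+η))) := h9
          _ = (b ^ κ / b * b ^ (1-(κ+η))) * (a-b)^(κ+η) := by ring
          _ = b ^ (-η) * (a-b)^(κ+η) := by rw [h10]
          _ ≤ 2 * b ^ (-η) * (a-b)^(κ+η) := by
            have h11 : (0:ℝ) ≤ b ^ (-η) := Real.rpow_nonneg hb0.le _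
            have h12 : (0:ℝ) ≤ (a-b)^(κ+η) := Real.rpow_nonneg hab0.le _
            nlinarith
      · -- b ≤ a - b
        have hab0 : 0 < a - b := lt_of_lt_of_le hb0 h2
        have h3 : a ≤ 2 * (a - b) := by linarith
        have h4 : a ^ κ ≤ (2 * (a-b)) ^ κ := Real.rpow_le_rpow ha h3 hκ0.le
        have h5 : (2 * (a-b)) ^ κ = 2 ^ κ * (a-b) ^ κ :=
          Real.mul_rpow (by norm_num) hab0.le
        have h6 : (2:ℝ) ^ κ ≤ 2 := by
          calc (2:ℝ) ^ κ ≤ (2:ℝ) ^ (1:ℝ) :=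
            Real.rpow_le_rpow_of_exponent_le (by norm_num) hκ1.le
          _ = 2 := Real.rpow_one _
        have h7 : (a-b) ^ κ = (a-b) ^ (κ+η) * (a-b) ^ (-η) := by
          rw [← Real.rpow_add hab0]; ring_nf
        have h8 : (a-b) ^ (-η) ≤ b ^ (-η) :=
          Real.rpow_le_rpow_of_nonpos hb0 h2 (by linarith)
        calc a ^ κ - b ^ κ ≤ a ^ κ := by
              have : (0:ℝ) ≤ b ^ κ := Real.rpow_nonneg hb0.le _
              linarith
        _ ≤ 2 ^ κ * (a-b) ^ κ := by rw [← h5]; exact h4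
        _ ≤ 2 * (a-b) ^ κ := mul_le_mul_of_nonneg_right h6 (Real.rpow_nonneg hab0.le _)
        _ = 2 * ((a-b) ^ (κ+η) * (a-b) ^ (-η)) := by rw [← h7]
        _ ≤ 2 * ((a-b) ^ (κ+η) * b ^ (-η)) := by
            apply mul_le_mul_of_nonneg_left _ (by norm_num)
            exact mul_le_mul_of_nonneg_left h8 (Real.rpow_nonneg hab0.le _)
        _ = 2 * b ^ (-η) * (a-b) ^ (κ+η) := by ring
    calc a ^ κ - b ^ κ ≤ 2 * b ^ (-η) * (a-b) ^ (κ+η) := key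
    _ ≤ 2 * (a ^ (-η) + b ^ (-η)) * (a-b) ^ (κ+η) := by
        apply mul_le_mul_of_nonneg_right _ (Real.rpow_nonneg (by linarith) _)
        have : (0:ℝ) ≤ a ^ (-η) := Real.rpow_nonneg ha _
        linarith

lemma interp (κ η : ℝ) (hκ0 : 0 < κ) (hκ1 : κ < 1) (hη0 : 0 < η) (hκη : κ + η < 1)
    {a b : ℝ} (ha : 0 ≤ a) (hb : 0 ≤ b) :
    |a ^ κ - b ^ κ| ≤ 2 * (a ^ (-η) + b ^ (-η)) * |a - b| ^ (κ + η) := by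
  rcases le_total b a with hba | hab
  · rw [abs_of_nonneg (sub_nonneg.mpr (Real.rpow_le_rpow hb hba hκ0.le)),
      abs_of_nonneg (sub_nonneg.mpr hba)]
    exact interp_aux κ η hκ0 hκ1 hη0 hκη hb hba
  · rw [abs_sub_comm, abs_sub_comm a b,
      abs_of_nonneg (sub_nonneg.mpr (Real.rpow_le_rpow ha hab hκ0.le)),
      abs_of_nonneg (sub_nonneg.mpr hab)]
    have := interp_aux κ η hκ0 hκ1 hη0 hκη ha hab
    calc b ^ κ - a ^ κ ≤ 2 * (b ^ (-η) + a ^ (-η)) * (b - a) ^ (κ+η) := this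
    _ = 2 * (a ^ (-η) + b ^ (-η)) * (b - a) ^ (κ+η) := by ring
open scoped ENNReal

-- ∫ u in a..c, (c-u)^e du type lemmas
lemma intInt_pow_sub_left {a c e : ℝ} (he : -1 < e) :
    IntervalIntegrable (fun u => (c - u) ^ e) volume a c := by
  have h := (intervalIntegrable_rpow' (a := c - c) (b := c - a) he)
  have := (h.comp_sub_left c).symm
  simpa using this

lemma int_pow_sub_left {a c e : ℝ} (hac : a ≤ c) (he : -1 < e) (he0 : e ≠ -1) :
    ∫ u in a..c, (c - u) ^ e = (c - a) ^ (e + 1) / (e + 1) := by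
  have h := intervalIntegral.integral_comp_sub_left (a := a) (b := c) (fun x => x ^ e) c
  rw [h]
  rw [integral_rpow (Or.inl he)]
  rw [sub_self, Real.zero_rpow (by linarith : e + 1 ≠ 0)]
  ring

lemma lint_pow_sub_left {a c e : ℝ} (hac : a ≤ c) (he : -1 < e) (he0 : e < 0) :
    ∫⁻ u in Set.Ioc a c, ENNReal.ofReal ((c - u) ^ e) =
      ENNReal.ofReal ((c - a) ^ (e + 1) / (e + 1)) := by
  have hint : IntegrableOn (fun u => (c - u) ^ e) (Set.Ioc a c) volume :=
    (intervalIntegrable_iff_integrableOn_Ioc_of_le hac).1 (intInt_pow_sub_left he)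
  have hnn : 0 ≤ᵐ[volume.restrict (Set.Ioc a c)] fun u => (c - u) ^ e := by
    filter_upwards [ae_restrict_mem measurableSet_Ioc] with u hu
    exact Real.rpow_nonneg (by linarith [hu.2]) _
  rw [← MeasureTheory.ofReal_integral_eq_lintegral_ofReal hint hnn]
  congr 1
  rw [← intervalIntegral.integral_of_le hac]
  exact int_pow_sub_left hac he (by linarith)

lemma lint_pow_sub_right {a c e : ℝ} (hac : a ≤ c) (he : -1 < e) (he0 : e < 0) :
    ∫⁻ s in Set.Ioc a c, ENNReal.ofReal ((s - a) ^ e) =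
      ENNReal.ofReal ((c - a) ^ (e + 1) / (e + 1)) := by
  have hint : IntegrableOn (fun s => (s - a) ^ e) (Set.Ioc a c) volume := by
    apply (intervalIntegrable_iff_integrableOn_Ioc_of_le hac).1
    have h := (intervalIntegrable_rpow' (a := a - a) (b := c - a) he)
    have := h.comp_sub_right a
    simpa using this
  have hnn : 0 ≤ᵐ[volume.restrict (Set.Ioc a c)] fun s => (s - a) ^ e := by
    filter_upwards [ae_restrict_mem measurableSet_Ioc] with s hs
    exact Real.rpow_nonneg (by linarith [hs.1]) _
  rw [← MeasureTheory.ofReal_integral_eq_lintegral_ofReal hint hnn]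
  congr 1
  rw [← intervalIntegral.integral_of_le hac]
  rw [intervalIntegral.integral_comp_sub_right (fun x => x ^ e) a]
  rw [integral_rpow (Or.inl he), sub_self, Real.zero_rpow (by linarith : e + 1 ≠ 0)]
  ring

lemma swap_bound {t₁ t₂ e : ℝ} (h12 : t₁ ≤ t₂) (he : -1 < e) (he0 : e < 0)
    (H : ℝ → ℝ≥0∞) (hH : Measurable H) :
    (∫⁻ s in Set.Ioc t₁ t₂, ∫⁻ u in Set.Ioc t₁ s, H u * ENNReal.ofReal ((s - u) ^ e))
      ≤ ∫⁻ u in Set.Ioc t₁ t₂, H u * ENNReal.ofReal ((t₂ - u) ^ (e + 1) / (e + 1)) := by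
  set f : ℝ → ℝ → ℝ≥0∞ :=
    fun s u => if t₁ < u ∧ u ≤ s then H u * ENNReal.ofReal ((s - u) ^ e) else 0 with hf
  have hmeas : Measurable (Function.uncurry f) := by
    apply Measurable.ite
    · exact (measurableSet_lt measurable_const measurable_snd).inter
        (measurableSet_le measurable_snd measurable_fst)
    · apply Measurable.mul (hH.comp measurable_snd)
      apply ENNReal.measurable_ofReal.comp
      have : Measurable fun p : ℝ × ℝ => p.1 - p.2 := measurable_fst.sub measurable_snd
      fun_prop
    · exact measurable_const
  have stepA : ∀ s ∈ Set.Ioc t₁ t₂,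
      (∫⁻ u in Set.Ioc t₁ s, H u * ENNReal.ofReal ((s - u) ^ e))
        = ∫⁻ u in Set.Ioc t₁ t₂, f s u := by
    intro s hs
    have h1 : ∀ u, f s u = (Set.Ioc t₁ s).indicator
        (fun u => H u * ENNReal.ofReal ((s - u) ^ e)) u := by
      intro u; simp [hf, Set.indicator_apply, Set.mem_Ioc]
    calc (∫⁻ u in Set.Ioc t₁ s, H u * ENNReal.ofReal ((s - u) ^ e))
        = ∫⁻ u in Set.Ioc t₁ s ∩ Set.Ioc t₁ t₂, H u * ENNReal.ofReal ((s - u) ^ e) := by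
          rw [Set.inter_eq_left.mpr (Set.Ioc_subset_Ioc_right hs.2)]
      _ = ∫⁻ u in Set.Ioc t₁ t₂, f s u := by
          rw [← Measure.restrict_restrict measurableSet_Ioc,
            ← lintegral_indicator measurableSet_Ioc]
          exact lintegral_congr fun u => (h1 u).symm
  have stepD : ∀ u ∈ Set.Ioc t₁ t₂,
      (∫⁻ s in Set.Ioc t₁ t₂, f s u)
        = H u * ENNReal.ofReal ((t₂ - u) ^ (e + 1) / (e + 1)) := by
    intro u hu
    have h1 : ∀ s, f s u = (Set.Ici u).indicator
        (fun s => H u * ENNReal.ofReal ((s - u) ^ e)) s := by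
      intro s
      simp only [hf, Set.indicator_apply, Set.mem_Ici]
      by_cases h : u ≤ s
      · simp [h, hu.1]
      · simp [h]
    have h2 : Set.Ici u ∩ Set.Ioc t₁ t₂ = Set.Icc u t₂ := by
      ext s
      simp only [Set.mem_inter_iff, Set.mem_Ici, Set.mem_Ioc, Set.mem_Icc]
      constructor
      · rintro ⟨a1, _, a3⟩; exact ⟨a1, a3⟩
      · rintro ⟨a1, a2⟩; exact ⟨a1, lt_of_lt_of_le hu.1 a1, a2⟩
    calc (∫⁻ s in Set.Ioc t₁ t₂, f s u)
        = ∫⁻ s in Set.Ioc t₁ t₂, (Set.Ici u).indicator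
            (fun s => H u * ENNReal.ofReal ((s - u) ^ e)) s := lintegral_congr fun s => h1 s
      _ = ∫⁻ s in Set.Ici u ∩ Set.Ioc t₁ t₂, H u * ENNReal.ofReal ((s - u) ^ e) := by
          rw [lintegral_indicator measurableSet_Ici,
            Measure.restrict_restrict measurableSet_Ici]
      _ = ∫⁻ s in Set.Icc u t₂, H u * ENNReal.ofReal ((s - u) ^ e) := by rw [h2]
      _ = ∫⁻ s in Set.Ioc u t₂, H u * ENNReal.ofReal ((s - u) ^ e) := by
          rw [Measure.restrict_congr_set MeasureTheory.Ioc_ae_eq_Icc.symm]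
      _ = H u * ∫⁻ s in Set.Ioc u t₂, ENNReal.ofReal ((s - u) ^ e) := by
          rw [lintegral_const_mul]
          fun_prop
      _ = H u * ENNReal.ofReal ((t₂ - u) ^ (e + 1) / (e + 1)) := by
          rw [lint_pow_sub_right hu.2 he he0]
  calc (∫⁻ s in Set.Ioc t₁ t₂, ∫⁻ u in Set.Ioc t₁ s, H u * ENNReal.ofReal ((s - u) ^ e))
      = ∫⁻ s in Set.Ioc t₁ t₂, ∫⁻ u in Set.Ioc t₁ t₂, f s u :=
        setLIntegral_congr_fun measurableSet_Ioc stepA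
    _ = ∫⁻ u in Set.Ioc t₁ t₂, ∫⁻ s in Set.Ioc t₁ t₂, f s u :=
        lintegral_lintegral_swap hmeas.aemeasurable
    _ = ∫⁻ u in Set.Ioc t₁ t₂, H u * ENNReal.ofReal ((t₂ - u) ^ (e + 1) / (e + 1)) :=
        setLIntegral_congr_fun measurableSet_Ioc stepD
    _ ≤ _ := le_refl _

theorem stmt13 (γ κ η α : ℝ)
    (hγ : γ ∈ Ioo (1/2 : ℝ) 1) (hκ : κ ∈ Ioo (0:ℝ) 1)
    (hκγ : γ * (κ + 1) < 1)
    (hη : η ∈ Ioo ((1 - γ * (1 + κ)) / γ) (1 - κ))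
    (hα : α ∈ Ioo (1 - γ) (γ * (κ + η))) :
    ∃ c > 0, ∀ (m : ℕ) (T t₁ t₂ : ℝ), 0 < T → 0 ≤ t₁ → t₁ < t₂ → t₂ ≤ T →
      ∀ (y : ℝ → EuclideanSpace ℝ (Fin m))
        (σ : EuclideanSpace ℝ (Fin m) → EuclideanSpace ℝ (Fin m)) (N My : ℝ), 0 < N → 0 ≤ My →
      (∀ u ∈ Icc (0:ℝ) T, ∀ v ∈ Icc (0:ℝ) T, ‖y v - y u‖ ≤ My * |v - u| ^ γ) →
      σ 0 = 0 →
      (∀ ξ₁ ξ₂ : EuclideanSpace ℝ (Fin m),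
        ‖σ ξ₂ - σ ξ₁‖ ≤ N * |‖ξ₂‖ ^ κ - ‖ξ₁‖ ^ κ|) →
      IntervalIntegrable (fun s => ‖y s‖ ^ (-(η / (γ * (κ + η))))) volume 0 T →
      (∫ s in t₁..t₂,
          (∫ u in t₁..s, ‖σ (y s) - σ (y u)‖ / (s - u) ^ (α + 1)) * (t₂ - s) ^ (α + γ - 1))
        ≤ c * N * My ^ (κ + η) *
            (∫ s in (0:ℝ)..T, ‖y s‖ ^ (-(η / (γ * (κ + η))))) ^ (γ * (κ + η)) *
            (t₂ - t₁) ^ γ := by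
  obtain ⟨hγh, hγ1⟩ := hγ
  obtain ⟨hκ0, hκ1⟩ := hκ
  obtain ⟨hηlb, hη2⟩ := hη
  obtain ⟨hα1, hα2⟩ := hα
  have hγ0 : (0:ℝ) < γ := by linarith
  have hη0 : 0 < η := by
    have h1 : (0:ℝ) < 1 - γ * (1 + κ) := by nlinarith
    have h2 : (0:ℝ) < (1 - γ * (1 + κ)) / γ := div_pos h1 hγ0
    linarith
  have hκη1 : κ + η < 1 := by linarith
  have hκη0 : 0 < κ + η := by linarith
  have hβ0 : 0 < γ * (κ + η) := by positivity
  have hβ1 : γ * (κ + η) < 1 := by nlinarith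
  have hα0 : 0 < α := by linarith
  have hd0 : 0 < γ * (κ + η) - α := by linarith
  have hb0 : (0:ℝ) < α + γ - 1 := by linarith
  have he1 : (-1:ℝ) < γ * (κ + η) - α - 1 := by linarith
  have he0 : γ * (κ + η) - α - 1 < 0 := by linarith
  refine ⟨4 / (γ * (κ + η) - α), by positivity, ?_⟩
  intro m T t₁ t₂ hT ht₁ h12 h2T y σ N My hN hMy hHol hσ0 hLip hyInt
  have h0T : (0:ℝ) ≤ T := hT.le
  have hts : (0:ℝ) < t₂ - t₁ := by linarith
  have hInt0 : 0 ≤ ∫ s in (0:ℝ)..T, ‖y s‖ ^ (-(η / (γ * (κ + η)))) :=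
    intervalIntegral.integral_nonneg h0T (fun u _ => Real.rpow_nonneg (norm_nonneg _) _)
  have hRHS0 : 0 ≤ 4 / (γ * (κ + η) - α) * N * My ^ (κ + η) *
      (∫ s in (0:ℝ)..T, ‖y s‖ ^ (-(η / (γ * (κ + η))))) ^ (γ * (κ + η)) * (t₂ - t₁) ^ γ := by
    apply mul_nonneg
    apply mul_nonneg
    apply mul_nonneg
    apply mul_nonneg
    · positivity
    · exact hN.le
    · exact Real.rpow_nonneg hMy _
    · exact Real.rpow_nonneg hInt0 _
    · exact Real.rpow_nonneg hts.le _
  by_cases hJint : IntervalIntegrable (fun s =>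
      (∫ u in t₁..s, ‖σ (y s) - σ (y u)‖ / (s - u) ^ (α + 1)) * (t₂ - s) ^ (α + γ - 1))
      volume t₁ t₂
  swap
  · rw [intervalIntegral.integral_undef hJint]; exact hRHS0
  -- measurable nonneg version of v ↦ ‖y v‖ ^ (-η)
  have hHInt : IntegrableOn (fun s => ‖y s‖ ^ (-(η / (γ * (κ + η))))) (Ioc 0 T) volume :=
    (intervalIntegrable_iff_integrableOn_Ioc_of_le h0T).1 hyInt
  obtain ⟨H', hH'meas, hH'ae⟩ := hHInt.aemeasurable
  set h' : ℝ → ℝ := fun v => max (H' v ^ (γ * (κ + η))) 0 with hh'def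
  have hh'meas : Measurable h' := by
    apply Measurable.max _ measurable_const
    fun_prop
  have hh'0 : ∀ v, 0 ≤ h' v := fun v => le_max_right _ _
  have hβne : γ * (κ + η) ≠ 0 := hβ0.ne'
  have hhh' : ∀ᵐ v ∂(volume.restrict (Ioc 0 T)), ‖y v‖ ^ (-η) = h' v := by
    filter_upwards [hH'ae] with v hv
    have h1 : ‖y v‖ ^ (-η) = (‖y v‖ ^ (-(η / (γ * (κ + η))))) ^ (γ * (κ + η)) := by
      rw [← Real.rpow_mul (norm_nonneg _)]
      congr 1
      field_simp
    have h2 : (0:ℝ) ≤ H' v ^ (γ * (κ + η)) := by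
      rw [← hv]
      exact Real.rpow_nonneg (Real.rpow_nonneg (norm_nonneg _) _) _
    rw [h1, hv, hh'def]
    exact (max_eq_left h2).symm
  have hh'H : ∀ᵐ v ∂(volume.restrict (Ioc 0 T)),
      h' v ^ (1 / (γ * (κ + η))) = ‖y v‖ ^ (-(η / (γ * (κ + η)))) := by
    filter_upwards [hhh'] with v hv
    rw [← hv, ← Real.rpow_mul (norm_nonneg _)]
    congr 1
    field_simp
  -- core pointwise estimate
  have hcore : ∀ s ∈ Ioc t₁ t₂, ∀ u ∈ Ioc t₁ s,
      ‖σ (y s) - σ (y u)‖ / (s - u) ^ (α + 1) ≤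
        2 * N * My ^ (κ + η) * (‖y s‖ ^ (-η) + ‖y u‖ ^ (-η)) *
          (s - u) ^ (γ * (κ + η) - α - 1) := by
    intro s hs u hu
    rcases eq_or_lt_of_le hu.2 with hus | hus
    · rw [hus]
      simp only [sub_self, norm_zero, zero_div]
      rw [Real.zero_rpow (by linarith : γ * (κ + η) - α - 1 ≠ 0)]
      simp
    · have hsu : 0 < s - u := by linarith
      have huIcc : u ∈ Icc (0:ℝ) T := ⟨by linarith [hu.1], by linarith [hs.2]⟩
      have hsIcc : s ∈ Icc (0:ℝ) T := ⟨by linarith [hs.1], by linarith [hs.2]⟩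
      have hA : ‖σ (y s) - σ (y u)‖ ≤ N * |‖y s‖ ^ κ - ‖y u‖ ^ κ| := hLip (y u) (y s)
      have hB : |‖y s‖ ^ κ - ‖y u‖ ^ κ| ≤
          2 * (‖y s‖ ^ (-η) + ‖y u‖ ^ (-η)) * |‖y s‖ - ‖y u‖| ^ (κ + η) :=
        interp κ η hκ0 hκ1 hη0 hκη1 (norm_nonneg _) (norm_nonneg _)
      have hC : |‖y s‖ - ‖y u‖| ≤ My * (s - u) ^ γ := by
        have h1 : |‖y s‖ - ‖y u‖| ≤ ‖y s - y u‖ := abs_norm_sub_norm_le _ _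
        have h2 := hHol u huIcc s hsIcc
        rw [abs_of_pos hsu] at h2
        linarith
      have hD : |‖y s‖ - ‖y u‖| ^ (κ + η) ≤ My ^ (κ + η) * (s - u) ^ (γ * (κ + η)) := by
        calc |‖y s‖ - ‖y u‖| ^ (κ + η) ≤ (My * (s - u) ^ γ) ^ (κ + η) :=
              Real.rpow_le_rpow (abs_nonneg _) hC hκη0.le
        _ = My ^ (κ + η) * ((s - u) ^ γ) ^ (κ + η) :=
              Real.mul_rpow hMy (Real.rpow_nonneg hsu.le _)
        _ = My ^ (κ + η) * (s - u) ^ (γ * (κ + η)) := by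
              rw [← Real.rpow_mul hsu.le]
      have hnn1 : (0:ℝ) ≤ ‖y s‖ ^ (-η) + ‖y u‖ ^ (-η) := by
        have := Real.rpow_nonneg (norm_nonneg (y s)) (-η)
        have := Real.rpow_nonneg (norm_nonneg (y u)) (-η)
        linarith
      have hE : ‖σ (y s) - σ (y u)‖ ≤
          2 * N * My ^ (κ + η) * (‖y s‖ ^ (-η) + ‖y u‖ ^ (-η)) * (s - u) ^ (γ * (κ + η)) := by
        calc ‖σ (y s) - σ (y u)‖ ≤ N * |‖y s‖ ^ κ - ‖y u‖ ^ κ| := hA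
        _ ≤ N * (2 * (‖y s‖ ^ (-η) + ‖y u‖ ^ (-η)) * |‖y s‖ - ‖y u‖| ^ (κ + η)) :=
            mul_le_mul_of_nonneg_left hB hN.le
        _ ≤ N * (2 * (‖y s‖ ^ (-η) + ‖y u‖ ^ (-η)) *
              (My ^ (κ + η) * (s - u) ^ (γ * (κ + η)))) := by
            apply mul_le_mul_of_nonneg_left _ hN.le
            apply mul_le_mul_of_nonneg_left hD
            positivity
        _ = 2 * N * My ^ (κ + η) * (‖y s‖ ^ (-η) + ‖y u‖ ^ (-η)) *
              (s - u) ^ (γ * (κ + η)) := by ring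
      rw [div_le_iff₀ (Real.rpow_pos_of_pos hsu _)]
      calc ‖σ (y s) - σ (y u)‖ ≤
            2 * N * My ^ (κ + η) * (‖y s‖ ^ (-η) + ‖y u‖ ^ (-η)) *
              (s - u) ^ (γ * (κ + η)) := hE
      _ = 2 * N * My ^ (κ + η) * (‖y s‖ ^ (-η) + ‖y u‖ ^ (-η)) *
            (s - u) ^ (γ * (κ + η) - α - 1) * (s - u) ^ (α + 1) := by
          rw [show γ * (κ + η) = γ * (κ + η) - α - 1 + (α + 1) by ring, Real.rpow_add hsu]
          ring
      _ ≤ _ := le_refl _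
  -- nonnegativity of the inner integral
  have hInn : ∀ s, t₁ ≤ s →
      0 ≤ ∫ u in t₁..s, ‖σ (y s) - σ (y u)‖ / (s - u) ^ (α + 1) := fun s hs =>
    intervalIntegral.integral_nonneg hs
      (fun u hu => div_nonneg (norm_nonneg _) (Real.rpow_nonneg (by linarith [hu.2]) _))
  -- Step 1: inner integral bound in ENNReal
  have hIle : ∀ s ∈ Ioc t₁ t₂,
      ENNReal.ofReal (∫ u in t₁..s, ‖σ (y s) - σ (y u)‖ / (s - u) ^ (α + 1)) ≤
        ∫⁻ u in Ioc t₁ s, ENNReal.ofReal (2 * N * My ^ (κ + η) *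
          (‖y s‖ ^ (-η) + ‖y u‖ ^ (-η)) * (s - u) ^ (γ * (κ + η) - α - 1)) := by
    intro s hs
    by_cases hint : IntervalIntegrable
        (fun u => ‖σ (y s) - σ (y u)‖ / (s - u) ^ (α + 1)) volume t₁ s
    · have hnn : 0 ≤ᵐ[volume.restrict (Ioc t₁ s)]
          fun u => ‖σ (y s) - σ (y u)‖ / (s - u) ^ (α + 1) := by
        filter_upwards [ae_restrict_mem measurableSet_Ioc] with u hu
        exact div_nonneg (norm_nonneg _) (Real.rpow_nonneg (by linarith [hu.2]) _)
      rw [intervalIntegral.integral_of_le hs.1.le,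
        MeasureTheory.ofReal_integral_eq_lintegral_ofReal
          ((intervalIntegrable_iff_integrableOn_Ioc_of_le hs.1.le).1 hint) hnn]
      apply lintegral_mono_ae
      filter_upwards [ae_restrict_mem measurableSet_Ioc] with u hu
      exact ENNReal.ofReal_le_ofReal (hcore s hs u hu)
    · rw [intervalIntegral.integral_undef hint]
      simp
  -- Ψ : the h'-weighted singular integral
  set Ψ : ℝ → ℝ≥0∞ := fun s => ∫⁻ u in Ioc t₁ s,
      ENNReal.ofReal (h' u) * ENNReal.ofReal ((s - u) ^ (γ * (κ + η) - α - 1)) with hΨdef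
  -- Step 2: split the bounding lintegral
  have hsplit : ∀ s ∈ Ioc t₁ t₂,
      (∫⁻ u in Ioc t₁ s, ENNReal.ofReal (2 * N * My ^ (κ + η) *
          (‖y s‖ ^ (-η) + ‖y u‖ ^ (-η)) * (s - u) ^ (γ * (κ + η) - α - 1)))
        = ENNReal.ofReal (2 * N * My ^ (κ + η)) *
          (ENNReal.ofReal (‖y s‖ ^ (-η)) *
              ENNReal.ofReal ((s - t₁) ^ (γ * (κ + η) - α) / (γ * (κ + η) - α)) + Ψ s) := by
    intro s hs
    have hCnn : (0:ℝ) ≤ 2 * N * My ^ (κ + η) := by positivity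
    have hsub : Ioc t₁ s ⊆ Ioc 0 T := Ioc_subset_Ioc ht₁ (by linarith [hs.2])
    have hfs : ∀ᵐ u ∂(volume.restrict (Ioc t₁ s)), ‖y u‖ ^ (-η) = h' u :=
      ae_restrict_of_ae_restrict_of_subset hsub hhh'
    have hwm : Measurable fun u => ENNReal.ofReal ((s - u) ^ (γ * (κ + η) - α - 1)) := by
      fun_prop
    calc (∫⁻ u in Ioc t₁ s, ENNReal.ofReal (2 * N * My ^ (κ + η) *
          (‖y s‖ ^ (-η) + ‖y u‖ ^ (-η)) * (s - u) ^ (γ * (κ + η) - α - 1)))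
        = ∫⁻ u in Ioc t₁ s, ENNReal.ofReal (2 * N * My ^ (κ + η)) *
            (ENNReal.ofReal (‖y s‖ ^ (-η)) *
                ENNReal.ofReal ((s - u) ^ (γ * (κ + η) - α - 1)) +
              ENNReal.ofReal (h' u) *
                ENNReal.ofReal ((s - u) ^ (γ * (κ + η) - α - 1))) := by
          apply lintegral_congr_ae
          filter_upwards [hfs] with u hfu
          rw [show 2 * N * My ^ (κ + η) * (‖y s‖ ^ (-η) + ‖y u‖ ^ (-η)) *
              (s - u) ^ (γ * (κ + η) - α - 1) = 2 * N * My ^ (κ + η) *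
              ((‖y s‖ ^ (-η) + ‖y u‖ ^ (-η)) * (s - u) ^ (γ * (κ + η) - α - 1))
              from by ring, ENNReal.ofReal_mul hCnn,
            ENNReal.ofReal_mul (add_nonneg (Real.rpow_nonneg (norm_nonneg _) _)
              (Real.rpow_nonneg (norm_nonneg _) _)), hfu,
            ENNReal.ofReal_add (Real.rpow_nonneg (norm_nonneg _) _) (hh'0 u), add_mul]
      _ = ENNReal.ofReal (2 * N * My ^ (κ + η)) *
            ((∫⁻ u in Ioc t₁ s, ENNReal.ofReal (‖y s‖ ^ (-η)) *
                ENNReal.ofReal ((s - u) ^ (γ * (κ + η) - α - 1))) + Ψ s) := by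
          rw [lintegral_const_mul' _ _ ENNReal.ofReal_ne_top,
            lintegral_add_left (hwm.const_mul _)]
      _ = ENNReal.ofReal (2 * N * My ^ (κ + η)) *
            (ENNReal.ofReal (‖y s‖ ^ (-η)) *
              ENNReal.ofReal ((s - t₁) ^ (γ * (κ + η) - α) / (γ * (κ + η) - α)) + Ψ s) := by
          rw [lintegral_const_mul' _ _ ENNReal.ofReal_ne_top,
            lint_pow_sub_left hs.1.le he1 he0,
            show γ * (κ + η) - α - 1 + 1 = γ * (κ + η) - α from by ring]
  -- abbreviations for the final bound
  set L : ℝ≥0∞ := ∫⁻ v in Ioc t₁ t₂, ENNReal.ofReal (h' v) with hLdef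
  have hsub2 : Ioc t₁ t₂ ⊆ Ioc 0 T := Ioc_subset_Ioc ht₁ h2T
  have hDmax : ∀ x, t₁ ≤ x → x ≤ t₂ →
      (x - t₁) ^ (γ * (κ + η) - α) / (γ * (κ + η) - α) ≤
        (t₂ - t₁) ^ (γ * (κ + η) - α) / (γ * (κ + η) - α) := by
    intro x hx1 hx2
    have h1 : (x - t₁) ^ (γ * (κ + η) - α) ≤ (t₂ - t₁) ^ (γ * (κ + η) - α) :=
      Real.rpow_le_rpow (by linarith) (by linarith) hd0.le
    exact (div_le_div_iff_of_pos_right hd0).mpr h1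
  have hDmax2 : ∀ x, t₁ ≤ x → x ≤ t₂ →
      (t₂ - x) ^ (γ * (κ + η) - α) / (γ * (κ + η) - α) ≤
        (t₂ - t₁) ^ (γ * (κ + η) - α) / (γ * (κ + η) - α) := by
    intro x hx1 hx2
    have h1 : (t₂ - x) ^ (γ * (κ + η) - α) ≤ (t₂ - t₁) ^ (γ * (κ + η) - α) :=
      Real.rpow_le_rpow (by linarith) (by linarith) hd0.le
    exact (div_le_div_iff_of_pos_right hd0).mpr h1
  -- Hölder bound on L
  have hLb : L ≤ ENNReal.ofReal ((∫ s in (0:ℝ)..T, ‖y s‖ ^ (-(η / (γ * (κ + η))))) ^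
      (γ * (κ + η)) * (t₂ - t₁) ^ (1 - γ * (κ + η))) := by
    have hpq : Real.HolderConjugate (1 / (γ * (κ + η))) (1 / (1 - γ * (κ + η))) := by
      constructor
      · rw [one_div, one_div, inv_inv, inv_inv, inv_one]; ring
      · positivity
      · rw [one_div]; exact inv_pos.mpr (by linarith)
    have hHolder := ENNReal.lintegral_mul_le_Lp_mul_Lq (volume.restrict (Ioc t₁ t₂)) hpq
        (f := fun v => ENNReal.ofReal (h' v)) (g := fun _ => 1) (by fun_prop) aemeasurable_const
    simp only [Pi.mul_apply, mul_one, ENNReal.one_rpow] at hHolder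
    rw [setLIntegral_one, one_div_one_div, one_div_one_div, Real.volume_Ioc] at hHolder
    refine le_trans hHolder ?_
    rw [ENNReal.ofReal_mul (Real.rpow_nonneg hInt0 _)]
    apply mul_le_mul'
    · rw [← ENNReal.ofReal_rpow_of_nonneg hInt0 hβ0.le]
      apply ENNReal.rpow_le_rpow _ hβ0.le
      calc ∫⁻ v in Ioc t₁ t₂, ENNReal.ofReal (h' v) ^ (1 / (γ * (κ + η)))
          = ∫⁻ v in Ioc t₁ t₂, ENNReal.ofReal (‖y v‖ ^ (-(η / (γ * (κ + η))))) := by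
            apply lintegral_congr_ae
            filter_upwards [ae_restrict_of_ae_restrict_of_subset hsub2 hh'H] with v hv
            rw [ENNReal.ofReal_rpow_of_nonneg (hh'0 v) (by positivity), hv]
        _ ≤ ∫⁻ v in Ioc 0 T, ENNReal.ofReal (‖y v‖ ^ (-(η / (γ * (κ + η))))) :=
            lintegral_mono' (Measure.restrict_mono hsub2 le_rfl) le_rfl
        _ = ENNReal.ofReal (∫ v in Ioc 0 T, ‖y v‖ ^ (-(η / (γ * (κ + η))))) :=
            (MeasureTheory.ofReal_integral_eq_lintegral_ofReal hHInt
              (Filter.Eventually.of_forall fun v =>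
                Real.rpow_nonneg (norm_nonneg _) _)).symm
        _ = ENNReal.ofReal (∫ s in (0:ℝ)..T, ‖y s‖ ^ (-(η / (γ * (κ + η))))) := by
            rw [intervalIntegral.integral_of_le h0T]
    · rw [← ENNReal.ofReal_rpow_of_nonneg hts.le (by linarith)]
  -- nonnegativity of the outer integrand
  have hJnn : 0 ≤ᵐ[volume.restrict (Ioc t₁ t₂)] fun s =>
      (∫ u in t₁..s, ‖σ (y s) - σ (y u)‖ / (s - u) ^ (α + 1)) *
        (t₂ - s) ^ (α + γ - 1) := by
    filter_upwards [ae_restrict_mem measurableSet_Ioc] with s hsm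
    exact mul_nonneg (hInn s hsm.1.le) (Real.rpow_nonneg (by linarith [hsm.2]) _)
  -- the master chain in ℝ≥0∞
  have key : ENNReal.ofReal (∫ s in t₁..t₂,
      (∫ u in t₁..s, ‖σ (y s) - σ (y u)‖ / (s - u) ^ (α + 1)) * (t₂ - s) ^ (α + γ - 1)) ≤
      ENNReal.ofReal (4 / (γ * (κ + η) - α) * N * My ^ (κ + η) *
        (∫ s in (0:ℝ)..T, ‖y s‖ ^ (-(η / (γ * (κ + η))))) ^ (γ * (κ + η)) *
        (t₂ - t₁) ^ γ) := by
    rw [intervalIntegral.integral_of_le h12.le,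
      MeasureTheory.ofReal_integral_eq_lintegral_ofReal
        ((intervalIntegrable_iff_integrableOn_Ioc_of_le h12.le).1 hJint) hJnn]
    calc (∫⁻ s in Ioc t₁ t₂, ENNReal.ofReal
          ((∫ u in t₁..s, ‖σ (y s) - σ (y u)‖ / (s - u) ^ (α + 1)) *
            (t₂ - s) ^ (α + γ - 1)))
        ≤ ∫⁻ s in Ioc t₁ t₂, (ENNReal.ofReal (2 * N * My ^ (κ + η)) *
            ENNReal.ofReal ((t₂ - t₁) ^ (α + γ - 1))) *
            (ENNReal.ofReal (h' s) *
              ENNReal.ofReal ((t₂ - t₁) ^ (γ * (κ + η) - α) / (γ * (κ + η) - α)) + Ψ s) := by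
          apply lintegral_mono_ae
          filter_upwards [ae_restrict_mem measurableSet_Ioc,
            ae_restrict_of_ae_restrict_of_subset hsub2 hhh'] with s hsm hseq
          rw [ENNReal.ofReal_mul (hInn s hsm.1.le)]
          calc ENNReal.ofReal (∫ u in t₁..s, ‖σ (y s) - σ (y u)‖ / (s - u) ^ (α + 1)) *
                ENNReal.ofReal ((t₂ - s) ^ (α + γ - 1))
              ≤ (ENNReal.ofReal (2 * N * My ^ (κ + η)) *
                  (ENNReal.ofReal (h' s) *
                    ENNReal.ofReal ((t₂ - t₁) ^ (γ * (κ + η) - α) / (γ * (κ + η) - α)) + Ψ s)) *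
                  ENNReal.ofReal ((t₂ - t₁) ^ (α + γ - 1)) := by
                apply mul_le_mul'
                · refine le_trans (hIle s hsm) ?_
                  rw [hsplit s hsm, hseq]
                  apply mul_le_mul' le_rfl
                  apply add_le_add _ le_rfl
                  apply mul_le_mul' le_rfl
                  exact ENNReal.ofReal_le_ofReal (hDmax s hsm.1.le hsm.2)
                · exact ENNReal.ofReal_le_ofReal
                    (Real.rpow_le_rpow (by linarith [hsm.2]) (by linarith [hsm.1]) hb0.le)
            _ = (ENNReal.ofReal (2 * N * My ^ (κ + η)) *
                  ENNReal.ofReal ((t₂ - t₁) ^ (α + γ - 1))) *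
                  (ENNReal.ofReal (h' s) *
                    ENNReal.ofReal ((t₂ - t₁) ^ (γ * (κ + η) - α) / (γ * (κ + η) - α)) + Ψ s) := by
                ring
      _ = (ENNReal.ofReal (2 * N * My ^ (κ + η)) * ENNReal.ofReal ((t₂ - t₁) ^ (α + γ - 1))) *
            ((∫⁻ s in Ioc t₁ t₂, ENNReal.ofReal (h' s) *
              ENNReal.ofReal ((t₂ - t₁) ^ (γ * (κ + η) - α) / (γ * (κ + η) - α))) +
              ∫⁻ s in Ioc t₁ t₂, Ψ s) := by
          rw [lintegral_const_mul' _ _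
              (ENNReal.mul_ne_top ENNReal.ofReal_ne_top ENNReal.ofReal_ne_top),
            lintegral_add_left
              (hh'meas.ennreal_ofReal.mul_const _)]
      _ ≤ (ENNReal.ofReal (2 * N * My ^ (κ + η)) * ENNReal.ofReal ((t₂ - t₁) ^ (α + γ - 1))) *
            ((L * ENNReal.ofReal ((t₂ - t₁) ^ (γ * (κ + η) - α) / (γ * (κ + η) - α))) +
              (L * ENNReal.ofReal ((t₂ - t₁) ^ (γ * (κ + η) - α) / (γ * (κ + η) - α)))) := by
          apply mul_le_mul' le_rfl
          apply add_le_add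
          · rw [lintegral_mul_const' _ _ ENNReal.ofReal_ne_top]
          · have hswap := swap_bound h12.le he1 he0 (fun u => ENNReal.ofReal (h' u))
              hh'meas.ennreal_ofReal
            simp only [(by ring : γ * (κ + η) - α - 1 + 1 = γ * (κ + η) - α)] at hswap
            refine le_trans hswap ?_
            rw [← lintegral_mul_const'
              (ENNReal.ofReal ((t₂ - t₁) ^ (γ * (κ + η) - α) / (γ * (κ + η) - α)))
              (fun u => ENNReal.ofReal (h' u)) ENNReal.ofReal_ne_top]
            apply lintegral_mono_ae
            filter_upwards [ae_restrict_mem measurableSet_Ioc] with u hu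
            exact mul_le_mul' le_rfl
              (ENNReal.ofReal_le_ofReal (hDmax2 u hu.1.le hu.2))
      _ ≤ (ENNReal.ofReal (2 * N * My ^ (κ + η)) * ENNReal.ofReal ((t₂ - t₁) ^ (α + γ - 1))) *
            ((ENNReal.ofReal ((∫ s in (0:ℝ)..T, ‖y s‖ ^ (-(η / (γ * (κ + η))))) ^
                (γ * (κ + η)) * (t₂ - t₁) ^ (1 - γ * (κ + η))) *
              ENNReal.ofReal ((t₂ - t₁) ^ (γ * (κ + η) - α) / (γ * (κ + η) - α))) +
             (ENNReal.ofReal ((∫ s in (0:ℝ)..T, ‖y s‖ ^ (-(η / (γ * (κ + η))))) ^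
                (γ * (κ + η)) * (t₂ - t₁) ^ (1 - γ * (κ + η))) *
              ENNReal.ofReal ((t₂ - t₁) ^ (γ * (κ + η) - α) / (γ * (κ + η) - α)))) :=
          mul_le_mul' le_rfl (add_le_add (mul_le_mul' hLb le_rfl) (mul_le_mul' hLb le_rfl))
      _ = ENNReal.ofReal ((2 * N * My ^ (κ + η) * (t₂ - t₁) ^ (α + γ - 1)) *
            (((∫ s in (0:ℝ)..T, ‖y s‖ ^ (-(η / (γ * (κ + η))))) ^ (γ * (κ + η)) *
                (t₂ - t₁) ^ (1 - γ * (κ + η)) *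
                ((t₂ - t₁) ^ (γ * (κ + η) - α) / (γ * (κ + η) - α))) +
             ((∫ s in (0:ℝ)..T, ‖y s‖ ^ (-(η / (γ * (κ + η))))) ^ (γ * (κ + η)) *
                (t₂ - t₁) ^ (1 - γ * (κ + η)) *
                ((t₂ - t₁) ^ (γ * (κ + η) - α) / (γ * (κ + η) - α))))) := by
          rw [ENNReal.ofReal_mul
              (by positivity : (0:ℝ) ≤ 2 * N * My ^ (κ + η) * (t₂ - t₁) ^ (α + γ - 1)),
            ENNReal.ofReal_mul (by positivity : (0:ℝ) ≤ 2 * N * My ^ (κ + η)),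
            ENNReal.ofReal_add (mul_nonneg (mul_nonneg (Real.rpow_nonneg hInt0 _)
                (Real.rpow_nonneg hts.le _)) (by positivity))
              (mul_nonneg (mul_nonneg (Real.rpow_nonneg hInt0 _)
                (Real.rpow_nonneg hts.le _)) (by positivity)),
            ENNReal.ofReal_mul (mul_nonneg (Real.rpow_nonneg hInt0 _)
              (Real.rpow_nonneg hts.le _))]
      _ ≤ ENNReal.ofReal (4 / (γ * (κ + η) - α) * N * My ^ (κ + η) *
            (∫ s in (0:ℝ)..T, ‖y s‖ ^ (-(η / (γ * (κ + η))))) ^ (γ * (κ + η)) *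
            (t₂ - t₁) ^ γ) := by
          apply ENNReal.ofReal_le_ofReal
          apply le_of_eq
          have hpow : (t₂ - t₁) ^ (α + γ - 1) * ((t₂ - t₁) ^ (1 - γ * (κ + η)) *
              (t₂ - t₁) ^ (γ * (κ + η) - α)) = (t₂ - t₁) ^ γ := by
            rw [← Real.rpow_add hts, ← Real.rpow_add hts]
            congr 1
            ring
          calc (2 * N * My ^ (κ + η) * (t₂ - t₁) ^ (α + γ - 1)) *
              (((∫ s in (0:ℝ)..T, ‖y s‖ ^ (-(η / (γ * (κ + η))))) ^ (γ * (κ + η)) *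
                  (t₂ - t₁) ^ (1 - γ * (κ + η)) *
                  ((t₂ - t₁) ^ (γ * (κ + η) - α) / (γ * (κ + η) - α))) +
               ((∫ s in (0:ℝ)..T, ‖y s‖ ^ (-(η / (γ * (κ + η))))) ^ (γ * (κ + η)) *
                  (t₂ - t₁) ^ (1 - γ * (κ + η)) *
                  ((t₂ - t₁) ^ (γ * (κ + η) - α) / (γ * (κ + η) - α))))
              = 4 * N * My ^ (κ + η) *
                  (∫ s in (0:ℝ)..T, ‖y s‖ ^ (-(η / (γ * (κ + η))))) ^ (γ * (κ + η)) *
                  ((t₂ - t₁) ^ (α + γ - 1) * ((t₂ - t₁) ^ (1 - γ * (κ + η)) *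
                    (t₂ - t₁) ^ (γ * (κ + η) - α))) / (γ * (κ + η) - α) := by
                ring
            _ = 4 / (γ * (κ + η) - α) * N * My ^ (κ + η) *
                  (∫ s in (0:ℝ)..T, ‖y s‖ ^ (-(η / (γ * (κ + η))))) ^ (γ * (κ + η)) *
                  (t₂ - t₁) ^ γ := by
                rw [hpow]
                ring
  exact (ENNReal.ofReal_le_ofReal_iff hRHS0).mp key
end
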